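/- Consider n agents, each agent i with a fixed nonempty peer set, a finite set of quantile levels T ⊂ [0,1], real coefficients λ_τ for τ ∈ T with ∑_{τ∈T} |λ_τ| < 1, and constants c_i ∈ R. Define the best response map BR: R^n → R^n by BR_i(y) = c_i + ∑_{τ∈T} λ_τ q_{τ,i}(y_{-i}), where q_{τ,i} is the Type-7 sample τ-quantile of the peer outcomes of i. Then BR is a contraction on (R^n, ‖·‖_∞) with Lipschitz constant ∑_{τ∈T} |λ_τ|. -/

import Mathlib

/-- The `k`-th smallest (0-indexed) outcome among the peers in `P` under outcome vector `y`. -/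
noncomputable def orderStat {n : ℕ} (P : Finset (Fin n)) (y : Fin n → ℝ) (k : ℕ) : ℝ :=
  ((P.val.map y).sort (· ≤ ·)).getD k 0

/-- The Type-7 sample τ-quantile of the outcomes of the peers in `P`:
`(1-ω) y_{(π)} + ω y_{(π+1)}` with `π = ⌊τ(d-1)⌋ + 1` (1-based; here 0-based `⌊τ(d-1)⌋`)
and `ω = τ(d-1) - ⌊τ(d-1)⌋`. -/
noncomputable def quantile7 {n : ℕ} (P : Finset (Fin n)) (y : Fin n → ℝ) (τ : ℝ) : ℝ :=
  let h : ℝ := τ * ((P.card : ℝ) - 1)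
  (1 - (h - ⌊h⌋)) * orderStat P y ⌊h⌋.toNat + (h - ⌊h⌋) * orderStat P y (⌊h⌋.toNat + 1)

lemma orderStat_mono {n : ℕ} (P : Finset (Fin n)) {y z : Fin n → ℝ}
    (h : ∀ i, y i ≤ z i) {k : ℕ} (hk : k < P.card) :
    orderStat P y k ≤ orderStat P z k := by
  classical
  set l := ((P.val.map y).sort (· ≤ ·)) with hl
  set m := ((P.val.map z).sort (· ≤ ·)) with hm
  have hls : l.Pairwise (· ≤ ·) := Multiset.pairwise_sort _ _
  have hms : m.Pairwise (· ≤ ·) := Multiset.pairwise_sort _ _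
  have hll : l.length = P.card := by
    simp [hl, Multiset.length_sort]
  have hml : m.length = P.card := by
    simp [hm, Multiset.length_sort]
  have hkl : k < l.length := by omega
  have hkm : k < m.length := by omega
  rw [orderStat, orderStat, ← hl, ← hm, List.getD_eq_getElem _ _ hkl,
    List.getD_eq_getElem _ _ hkm]
  by_contra hc
  push_neg at hc
  set c := l[k] with hcdef
  -- at most k elements of l are < c
  have h1 : l.countP (fun x => decide (x < c)) ≤ k := by
    have hdrop : (l.drop k).countP (fun x => decide (x < c)) = 0 := by
      rw [List.countP_eq_zero]
      intro a ha
      obtain ⟨i, hi, rfl⟩ := List.getElem_of_mem ha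
      rw [List.getElem_drop]
      simp only [decide_eq_true_eq, not_lt]
      have hki : k + i < l.length := by
        have := hi; simp [List.length_drop] at this; omega
      have := hls.rel_get_of_le (a := ⟨k, hkl⟩) (b := ⟨k + i, hki⟩)
        (by simp [Fin.le_def])
      simpa [hcdef] using this
    calc l.countP (fun x => decide (x < c))
        = (l.take k).countP (fun x => decide (x < c))
          + (l.drop k).countP (fun x => decide (x < c)) := by
          conv_lhs => rw [← List.take_append_drop k l]
          rw [List.countP_append]
      _ ≤ (l.take k).length + 0 := by
          rw [hdrop]; exact Nat.add_le_add List.countP_le_length le_rfl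
      _ ≤ k := by simp [List.length_take]
  -- at least k+1 elements of m are < c
  have h2 : k + 1 ≤ m.countP (fun x => decide (x < c)) := by
    have htl : (m.take (k + 1)).length = k + 1 := by
      simp [List.length_take]; omega
    have htake : (m.take (k + 1)).countP (fun x => decide (x < c)) = k + 1 := by
      rw [List.countP_eq_length.2, htl]
      intro a ha
      obtain ⟨i, hi, rfl⟩ := List.getElem_of_mem ha
      rw [List.getElem_take]
      simp only [decide_eq_true_eq]
      have hik : i ≤ k := by rw [htl] at hi; omega
      have him : i < m.length := by omega
      have : m[i] ≤ m[k] := by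
        have := hms.rel_get_of_le (a := ⟨i, him⟩) (b := ⟨k, hkm⟩)
          (by simp [Fin.le_def, hik])
        simpa using this
      exact lt_of_le_of_lt this hc
    calc k + 1 = (m.take (k + 1)).countP (fun x => decide (x < c)) := htake.symm
      _ ≤ m.countP (fun x => decide (x < c)) := by
          conv_rhs => rw [← List.take_append_drop (k + 1) m]
          rw [List.countP_append]; omega
  -- transfer counts through the multisets
  have hcl : l.countP (fun x => decide (x < c))
      = Multiset.countP (fun x => x < c) (P.val.map y) := by
    rw [← Multiset.coe_countP, hl, Multiset.sort_eq]
  have hcm : m.countP (fun x => decide (x < c))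
      = Multiset.countP (fun x => x < c) (P.val.map z) := by
    rw [← Multiset.coe_countP, hm, Multiset.sort_eq]
  have h3 : Multiset.countP (fun x => x < c) (P.val.map z)
      ≤ Multiset.countP (fun x => x < c) (P.val.map y) := by
    rw [Multiset.countP_map, Multiset.countP_map]
    exact Multiset.card_le_card (Multiset.monotone_filter_right _
      (fun j hj => lt_of_le_of_lt (h j) hj))
  omega

lemma orderStat_add_const {n : ℕ} (P : Finset (Fin n)) (y : Fin n → ℝ) (ε : ℝ)
    {k : ℕ} (hk : k < P.card) :
    orderStat P (fun i => y i + ε) k = orderStat P y k + ε := by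
  classical
  have hmap : ((P.val.map y).sort (· ≤ ·)).map (· + ε)
      = (P.val.map fun i => y i + ε).sort (· ≤ ·) := by
    rw [Multiset.map_sort (r := (· ≤ ·)) (r' := (· ≤ ·)) (f := (· + ε)) _
      (fun a _ b _ => (add_le_add_iff_right ε).symm), Multiset.map_map]
    rfl
  have hlen : k < ((P.val.map y).sort (· ≤ ·)).length := by
    rw [Multiset.length_sort]; simpa using hk
  have hlen2 : k < ((P.val.map fun i => y i + ε).sort (· ≤ ·)).length := by
    rw [Multiset.length_sort]; simpa using hk
  rw [orderStat, orderStat, List.getD_eq_getElem _ _ hlen2, List.getD_eq_getElem _ _ hlen]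
  rw [List.getElem_of_eq hmap.symm hlen2, List.getElem_map]

lemma orderStat_lip {n : ℕ} (P : Finset (Fin n)) {y z : Fin n → ℝ} {ε : ℝ}
    (h : ∀ i, |y i - z i| ≤ ε) {k : ℕ} (hk : k < P.card) :
    |orderStat P y k - orderStat P z k| ≤ ε := by
  rw [abs_sub_le_iff]
  constructor
  · have h1 : orderStat P y k ≤ orderStat P (fun i => z i + ε) k :=
      orderStat_mono P (fun i => by have := abs_le.1 (h i); linarith) hk
    rw [orderStat_add_const P z ε hk] at h1
    linarith
  · have h1 : orderStat P z k ≤ orderStat P (fun i => y i + ε) k :=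
      orderStat_mono P (fun i => by have := abs_le.1 (h i); linarith) hk
    rw [orderStat_add_const P y ε hk] at h1
    linarith

lemma quantile7_lip {n : ℕ} (P : Finset (Fin n)) (hP : P.Nonempty) {τ : ℝ}
    (hτ : τ ∈ Set.Icc (0 : ℝ) 1) {y z : Fin n → ℝ} {ε : ℝ}
    (h : ∀ i, |y i - z i| ≤ ε) :
    |quantile7 P y τ - quantile7 P z τ| ≤ ε := by
  obtain ⟨hτ0, hτ1⟩ := hτ
  have hd : 1 ≤ P.card := Finset.card_pos.2 hP
  set d : ℕ := P.card with hdd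
  set hr : ℝ := τ * ((d : ℝ) - 1) with hhr
  have hd1 : (1 : ℝ) ≤ (d : ℝ) := by exact_mod_cast hd
  have hh0 : 0 ≤ hr := mul_nonneg hτ0 (by linarith)
  have hh1 : hr ≤ (d : ℝ) - 1 := by
    have := mul_le_of_le_one_left (by linarith : (0:ℝ) ≤ (d:ℝ) - 1) hτ1
    linarith [this]
  have hfl0 : 0 ≤ ⌊hr⌋ := Int.floor_nonneg.2 hh0
  have hπcast : (⌊hr⌋.toNat : ℝ) = (⌊hr⌋ : ℝ) := by
    exact_mod_cast Int.toNat_of_nonneg hfl0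
  have hπd : ⌊hr⌋.toNat < d := by
    have h1 : (⌊hr⌋ : ℝ) ≤ hr := Int.floor_le hr
    have : (⌊hr⌋.toNat : ℝ) < (d : ℝ) := by rw [hπcast]; linarith
    exact_mod_cast this
  set ω : ℝ := hr - ⌊hr⌋ with hω
  have hω0 : 0 ≤ ω := by rw [hω]; linarith [Int.floor_le hr]
  have hω1 : ω ≤ 1 := by rw [hω]; linarith [Int.lt_floor_add_one hr]
  have hq : ∀ w : Fin n → ℝ, quantile7 P w τ
      = (1 - ω) * orderStat P w ⌊hr⌋.toNat + ω * orderStat P w (⌊hr⌋.toNat + 1) := by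
    intro w; rfl
  by_cases hωz : ω = 0
  · rw [hq, hq, hωz]
    simpa using orderStat_lip P h hπd
  · have hωpos : 0 < ω := lt_of_le_of_ne hω0 (Ne.symm hωz)
    have hπd1 : ⌊hr⌋.toNat + 1 < d := by
      by_contra hcon
      have heq : ⌊hr⌋.toNat = d - 1 := by omega
      have hcr : ((⌊hr⌋.toNat : ℕ) : ℝ) = (d : ℝ) - 1 := by
        rw [heq, Nat.cast_sub hd]; norm_num
      have h1 : (⌊hr⌋ : ℝ) ≤ hr := Int.floor_le hr
      have h2 : (⌊hr⌋ : ℝ) = (d : ℝ) - 1 := by rw [← hπcast, hcr]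
      exact hωz (by rw [hω]; linarith)
    rw [hq, hq]
    have e1 := orderStat_lip P h hπd
    have e2 := orderStat_lip P h hπd1
    have : (1 - ω) * orderStat P y ⌊hr⌋.toNat + ω * orderStat P y (⌊hr⌋.toNat + 1)
        - ((1 - ω) * orderStat P z ⌊hr⌋.toNat + ω * orderStat P z (⌊hr⌋.toNat + 1))
        = (1 - ω) * (orderStat P y ⌊hr⌋.toNat - orderStat P z ⌊hr⌋.toNat)
          + ω * (orderStat P y (⌊hr⌋.toNat + 1) - orderStat P z (⌊hr⌋.toNat + 1)) := by ring
    rw [this]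
    calc |(1 - ω) * (orderStat P y ⌊hr⌋.toNat - orderStat P z ⌊hr⌋.toNat)
          + ω * (orderStat P y (⌊hr⌋.toNat + 1) - orderStat P z (⌊hr⌋.toNat + 1))|
        ≤ (1 - ω) * |orderStat P y ⌊hr⌋.toNat - orderStat P z ⌊hr⌋.toNat|
          + ω * |orderStat P y (⌊hr⌋.toNat + 1) - orderStat P z (⌊hr⌋.toNat + 1)| := by
          refine (abs_add_le _ _).trans ?_
          rw [abs_mul, abs_mul, abs_of_nonneg (by linarith : (0:ℝ) ≤ 1 - ω),
            abs_of_nonneg hω0]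
      _ ≤ (1 - ω) * ε + ω * ε := by
          have h1ω : (0:ℝ) ≤ 1 - ω := by linarith
          exact add_le_add (mul_le_mul_of_nonneg_left e1 h1ω)
            (mul_le_mul_of_nonneg_left e2 hω0)
      _ = ε := by ring

/-- the best-response map of the quantile peer-effects game is a contraction
on `(ℝ^n, ‖·‖_∞)` with Lipschitz constant `∑_{τ∈T} |λ_τ|` (here `dist` is the sup distance). -/
theorem bestResponse_contraction {n : ℕ} (peers : Fin n → Finset (Fin n))
    (hpeers : ∀ i, (peers i).Nonempty)
    (T : Finset ℝ) (hT : ∀ τ ∈ T, τ ∈ Set.Icc (0 : ℝ) 1)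
    (lam : ℝ → ℝ) (hlam : ∑ τ ∈ T, |lam τ| < 1)
    (c : Fin n → ℝ) (BR : (Fin n → ℝ) → Fin n → ℝ)
    (hBR : ∀ y i, BR y i = c i + ∑ τ ∈ T, lam τ * quantile7 (peers i) y τ) :
    ∀ y yt : Fin n → ℝ, dist (BR y) (BR yt) ≤ (∑ τ ∈ T, |lam τ|) * dist y yt := by
  intro y yt
  have hC : 0 ≤ ∑ τ ∈ T, |lam τ| := Finset.sum_nonneg fun _ _ => abs_nonneg _
  rw [dist_pi_le_iff (mul_nonneg hC dist_nonneg)]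
  intro i
  rw [Real.dist_eq, hBR, hBR]
  have hpt : ∀ j, |y j - yt j| ≤ dist y yt := fun j => by
    rw [← Real.dist_eq]; exact dist_le_pi_dist y yt j
  have heq : c i + ∑ τ ∈ T, lam τ * quantile7 (peers i) y τ
      - (c i + ∑ τ ∈ T, lam τ * quantile7 (peers i) yt τ)
      = ∑ τ ∈ T, lam τ * (quantile7 (peers i) y τ - quantile7 (peers i) yt τ) := by
    rw [add_sub_add_left_eq_sub, ← Finset.sum_sub_distrib]
    exact Finset.sum_congr rfl fun τ _ => by ring
  rw [heq]
  calc |∑ τ ∈ T, lam τ * (quantile7 (peers i) y τ - quantile7 (peers i) yt τ)|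
      ≤ ∑ τ ∈ T, |lam τ * (quantile7 (peers i) y τ - quantile7 (peers i) yt τ)| :=
        Finset.abs_sum_le_sum_abs _ _
    _ ≤ ∑ τ ∈ T, |lam τ| * dist y yt := by
        refine Finset.sum_le_sum fun τ hτ => ?_
        rw [abs_mul]
        exact mul_le_mul_of_nonneg_left
          (quantile7_lip (peers i) (hpeers i) (hT τ hτ) hpt) (abs_nonneg _)
    _ = (∑ τ ∈ T, |lam τ|) * dist y yt := by rw [Finset.sum_mul]
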